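/- Summability of the second-moment series of the invariant law (Lemma A.4): for every ν > 0, the integral ∫_0^∞ (∑_{n=1}^∞ n² J_n(2r)² e^{−2νr} / r²) dr is finite, where J_n is the Bessel function of the first kind of order n. -/

import Mathlib

open MeasureTheory

noncomputable section

/-- The Bessel function of the first kind of integer order `n`, defined by its everywhere
convergent power series `J_n(s) = ∑_{k=0}^∞ ((-1)^k / (k! (k+n)!)) (s/2)^{2k+n}`. -/
def besselJ (n : ℕ) (s : ℝ) : ℝ :=
  ∑' k : ℕ, ((-1 : ℝ) ^ k / ((Nat.factorial k : ℝ) * (Nat.factorial (k + n) : ℝ))) *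
    (s / 2) ^ (2 * k + n)

namespace BesselAux

/-- Term of the Bessel series, in the variable `x = s/2`. -/
def u (m k : ℕ) (x : ℝ) : ℝ :=
  ((-1 : ℝ) ^ k / ((Nat.factorial k : ℝ) * (Nat.factorial (k + m) : ℝ))) * x ^ (2 * k + m)

lemma besselJ_eq (m : ℕ) (s : ℝ) : besselJ m s = ∑' k, u m k (s / 2) := rfl

lemma abs_u_le (m k : ℕ) (x : ℝ) :
    |u m k x| ≤ |x| ^ m / (Nat.factorial m) * ((x ^ 2) ^ k / (Nat.factorial k)) := by
  have h1 : |u m k x| = |x| ^ (2 * k + m) / ((Nat.factorial k : ℝ) * (Nat.factorial (k + m))) := by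
    rw [u, abs_mul, abs_div, abs_pow, abs_neg, abs_one, one_pow, abs_pow]
    rw [abs_of_nonneg (by positivity : (0:ℝ) ≤ (Nat.factorial k : ℝ) * (Nat.factorial (k + m)))]
    ring
  have h2 : |x| ^ (2 * k + m) = (x ^ 2) ^ k * |x| ^ m := by
    rw [pow_add, pow_mul, sq_abs]
  have h3 : |x| ^ m / (Nat.factorial m) * ((x ^ 2) ^ k / (Nat.factorial k)) =
      (x ^ 2) ^ k * |x| ^ m / ((Nat.factorial k : ℝ) * (Nat.factorial m)) := by ring
  rw [h1, h2, h3]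
  gcongr
  omega

lemma summable_abs_u (m : ℕ) (x : ℝ) : Summable fun k => |u m k x| :=
  Summable.of_nonneg_of_le (fun _ => abs_nonneg _) (fun k => abs_u_le m k x)
    ((Real.summable_pow_div_factorial (x ^ 2)).mul_left _)

lemma summable_u (m : ℕ) (x : ℝ) : Summable fun k => u m k x :=
  (summable_abs_u m x).of_abs

/-- `E x = ∑ (x²)^k/k!` (an upper bound constant). -/
def E (x : ℝ) : ℝ := ∑' k : ℕ, (x ^ 2) ^ k / (Nat.factorial k)

lemma E_nonneg (x : ℝ) : 0 ≤ E x :=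
  tsum_nonneg fun _ => by positivity

/-- `A m x = ∑ |u m k x|`. -/
def A (m : ℕ) (x : ℝ) : ℝ := ∑' k : ℕ, |u m k x|

lemma A_nonneg (m : ℕ) (x : ℝ) : 0 ≤ A m x := tsum_nonneg fun k => abs_nonneg _

lemma A_le (m : ℕ) (x : ℝ) : A m x ≤ |x| ^ m / (Nat.factorial m) * E x := by
  rw [A, E, ← tsum_mul_left]
  exact Summable.tsum_le_tsum (fun k => abs_u_le m k x) (summable_abs_u m x)
    ((Real.summable_pow_div_factorial (x ^ 2)).mul_left _)

lemma abs_tsum_u_le (m : ℕ) (x : ℝ) : |∑' k, u m k x| ≤ A m x := by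
  have h : Summable fun k => ‖u m k x‖ := by
    simpa only [Real.norm_eq_abs] using summable_abs_u m x
  have := norm_tsum_le_tsum_norm h
  simpa only [Real.norm_eq_abs, A] using this

lemma sq_tsum_u (m : ℕ) (x : ℝ) :
    (∑' k, u m k x) ^ 2 = ∑' p : ℕ × ℕ, u m p.1 x * u m p.2 x := by
  rw [sq]
  exact tsum_mul_tsum_of_summable_norm
    (by simpa [Real.norm_eq_abs] using summable_abs_u m x)
    (by simpa [Real.norm_eq_abs] using summable_abs_u m x)

lemma summable_abs_uu (m : ℕ) (x : ℝ) :
    Summable fun p : ℕ × ℕ => |u m p.1 x * u m p.2 x| := by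
  have := (summable_abs_u m x).mul_of_nonneg (summable_abs_u m x)
    (fun k => abs_nonneg _) (fun k => abs_nonneg _)
  simpa [abs_mul] using this

lemma summable_uu (m : ℕ) (x : ℝ) :
    Summable fun p : ℕ × ℕ => u m p.1 x * u m p.2 x :=
  (summable_abs_uu m x).of_abs

lemma tsum_abs_uu (m : ℕ) (x : ℝ) :
    ∑' p : ℕ × ℕ, |u m p.1 x * u m p.2 x| = A m x ^ 2 := by
  rw [sq, A]
  rw [tsum_mul_tsum_of_summable_norm
    (by simpa [Real.norm_eq_abs] using (summable_abs_u m x).abs)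
    (by simpa [Real.norm_eq_abs] using (summable_abs_u m x).abs)]
  simp [abs_mul]

lemma A_sq_le (n : ℕ) (x : ℝ) :
    A (n + 1) x ^ 2 ≤ (|x| * E x) ^ 2 * ((x ^ 2) ^ n / (Nat.factorial n)) := by
  have h1 : A (n + 1) x ^ 2 ≤ (|x| ^ (n + 1) / (Nat.factorial (n + 1)) * E x) ^ 2 := by
    have := A_le (n + 1) x
    have h0 := A_nonneg (n + 1) x
    nlinarith
  refine h1.trans ?_
  have hfac : (Nat.factorial n : ℝ) ≤ (Nat.factorial (n + 1) : ℝ) * (Nat.factorial (n + 1) : ℝ) := by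
    have h1 : Nat.factorial n ≤ Nat.factorial (n + 1) := Nat.factorial_le (by omega)
    have h2 : 1 ≤ Nat.factorial (n + 1) := Nat.one_le_iff_ne_zero.mpr (Nat.factorial_ne_zero _)
    have : Nat.factorial n ≤ Nat.factorial (n + 1) * Nat.factorial (n + 1) :=
      h1.trans (Nat.le_mul_of_pos_left _ (by omega))
    exact_mod_cast this
  have hxe : (|x| ^ (n + 1)) ^ 2 = x ^ 2 * ((x ^ 2) ^ n) := by
    rw [← pow_mul]
    rw [show (n + 1) * 2 = 2 * n + 2 by ring, pow_add, pow_mul, sq_abs]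
    ring
  rw [mul_pow, div_pow, hxe]
  rw [show (|x| * E x) ^ 2 * ((x ^ 2) ^ n / (Nat.factorial n)) =
    (x ^ 2 * (x ^ 2) ^ n) * E x ^ 2 / (Nat.factorial n) by rw [mul_pow, sq_abs]; ring]
  rw [show x ^ 2 * (x ^ 2) ^ n / (↑(n + 1).factorial ^ 2) * E x ^ 2 =
    (x ^ 2 * (x ^ 2) ^ n) * E x ^ 2 / (↑(n + 1).factorial * ↑(n + 1).factorial) by ring]
  gcongr

/-- The triple-indexed product terms for the sum `∑_{n≥1} J_n²`. -/
def g3 (x : ℝ) (t : ℕ × ℕ × ℕ) : ℝ := u (t.1 + 1) t.2.1 x * u (t.1 + 1) t.2.2 x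

lemma summable_Asq (x : ℝ) : Summable fun n : ℕ => A (n + 1) x ^ 2 :=
  Summable.of_nonneg_of_le (fun n => sq_nonneg _) (fun n => A_sq_le n x)
    ((Real.summable_pow_div_factorial (x ^ 2)).mul_left _)

lemma summable_abs_g3 (x : ℝ) : Summable fun t => |g3 x t| := by
  refine (summable_prod_of_nonneg (fun t => abs_nonneg _)).2 ⟨fun n => ?_, ?_⟩
  · exact summable_abs_uu (n + 1) x
  · refine (summable_Asq x).congr fun n => ?_
    exact (tsum_abs_uu (n + 1) x).symm

lemma summable_g3 (x : ℝ) : Summable (g3 x) := (summable_abs_g3 x).of_abs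

lemma tsum_g3 (x : ℝ) : ∑' t, g3 x t = ∑' n : ℕ, (∑' k, u (n + 1) k x) ^ 2 := by
  rw [Summable.tsum_prod' (summable_g3 x) (fun n => summable_uu (n + 1) x)]
  exact tsum_congr fun n => (sq_tsum_u (n + 1) x).symm

/-- Summability of the squares `(∑ u (n+1))²`. -/
lemma summable_Jsq_succ (x : ℝ) : Summable fun n : ℕ => (∑' k, u (n + 1) k x) ^ 2 := by
  refine Summable.of_nonneg_of_le (fun n => sq_nonneg _) (fun n => ?_) (summable_Asq x)
  have h := abs_tsum_u_le (n + 1) x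
  calc (∑' k, u (n + 1) k x) ^ 2 = |∑' k, u (n + 1) k x| ^ 2 := (sq_abs _).symm
    _ ≤ A (n + 1) x ^ 2 := by nlinarith [abs_nonneg (∑' k, u (n + 1) k x)]

/-- The quadruple-sum kernel, indexed by `(N, a, b)` with `c = N - b`, `d = N - a`. -/
def P (x : ℝ) (t : ℕ × ℕ × ℕ) : ℝ :=
  if t.2.1 ≤ t.1 ∧ t.2.2 ≤ t.1 then
    (-1 : ℝ) ^ (t.2.1 + (t.1 - t.2.2)) * x ^ (2 * t.1) /
      ((Nat.factorial t.2.1 : ℝ) * (Nat.factorial t.2.2) *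
        (Nat.factorial (t.1 - t.2.2)) * (Nat.factorial (t.1 - t.2.1)))
  else 0

def Pa (x : ℝ) (t : ℕ × ℕ × ℕ) : ℝ := if t.2.1 < t.2.2 then P x t else 0
def Pb (x : ℝ) (t : ℕ × ℕ × ℕ) : ℝ := if t.2.2 < t.2.1 then P x t else 0
def Pc (x : ℝ) (t : ℕ × ℕ × ℕ) : ℝ := if t.2.1 = t.2.2 then P x t else 0

lemma P_decomp (x : ℝ) (t : ℕ × ℕ × ℕ) : P x t = Pa x t + Pb x t + Pc x t := by
  rcases lt_trichotomy t.2.1 t.2.2 with h | h | h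
  · simp [Pa, Pb, Pc, h, not_lt_of_gt h, h.ne]
  · simp [Pa, Pb, Pc, h, lt_irrefl]
  · simp [Pa, Pb, Pc, h, not_lt_of_gt h, h.ne']

def phiA (t : ℕ × ℕ × ℕ) : ℕ × ℕ × ℕ := (t.2.1 + t.2.2 + t.1 + 1, t.2.1, t.2.1 + t.1 + 1)
def phiB (t : ℕ × ℕ × ℕ) : ℕ × ℕ × ℕ := (t.2.1 + t.2.2 + t.1 + 1, t.2.1 + t.1 + 1, t.2.1)
def phiC (p : ℕ × ℕ) : ℕ × ℕ × ℕ := (p.1 + p.2, p.1, p.1)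

lemma phiA_inj : Function.Injective phiA := by
  rintro ⟨n, k, l⟩ ⟨n', k', l'⟩ h
  simp only [phiA, Prod.mk.injEq] at h
  obtain ⟨h1, h2, h3⟩ := h
  simp only [Prod.mk.injEq]
  omega

lemma phiB_inj : Function.Injective phiB := by
  rintro ⟨n, k, l⟩ ⟨n', k', l'⟩ h
  simp only [phiB, Prod.mk.injEq] at h
  obtain ⟨h1, h2, h3⟩ := h
  simp only [Prod.mk.injEq]
  omega

lemma phiC_inj : Function.Injective phiC := by
  rintro ⟨k, l⟩ ⟨k', l'⟩ h
  simp only [phiC, Prod.mk.injEq] at h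
  obtain ⟨h1, h2⟩ := h
  simp only [Prod.mk.injEq]
  omega

lemma Pa_supp (x : ℝ) : ∀ t, t ∉ Set.range phiA → Pa x t = 0 := by
  rintro ⟨N, a, b⟩ ht
  by_contra h
  have hab : a < b := by
    by_contra h'; simp only [Pa] at h; rw [if_neg h'] at h; exact h rfl
  have hP : P x (N, a, b) ≠ 0 := by
    simp only [Pa, if_pos hab] at h; exact h
  have hcond : a ≤ N ∧ b ≤ N := by
    by_contra h'; simp only [P, if_neg h'] at hP; exact hP rfl
  exact ht ⟨(b - a - 1, a, N - b), by
    simp only [phiA, Prod.mk.injEq, true_and, and_true]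
    omega⟩

lemma Pb_supp (x : ℝ) : ∀ t, t ∉ Set.range phiB → Pb x t = 0 := by
  rintro ⟨N, a, b⟩ ht
  by_contra h
  have hab : b < a := by
    by_contra h'; simp only [Pb] at h; rw [if_neg h'] at h; exact h rfl
  have hP : P x (N, a, b) ≠ 0 := by
    simp only [Pb, if_pos hab] at h; exact h
  have hcond : a ≤ N ∧ b ≤ N := by
    by_contra h'; simp only [P, if_neg h'] at hP; exact hP rfl
  exact ht ⟨(a - b - 1, b, N - a), by
    simp only [phiB, Prod.mk.injEq, true_and, and_true]
    omega⟩

lemma Pc_supp (x : ℝ) : ∀ t, t ∉ Set.range phiC → Pc x t = 0 := by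
  rintro ⟨N, a, b⟩ ht
  by_contra h
  have hab : a = b := by
    by_contra h'; simp only [Pc] at h; rw [if_neg h'] at h; exact h rfl
  have hP : P x (N, a, b) ≠ 0 := by
    simp only [Pc, if_pos hab] at h; exact h
  have hcond : a ≤ N ∧ b ≤ N := by
    by_contra h'; simp only [P, if_neg h'] at hP; exact hP rfl
  exact ht ⟨(a, N - a), by
    simp only [phiC, Prod.mk.injEq, true_and, and_true]
    omega⟩

lemma fact_ne (k : ℕ) : (Nat.factorial k : ℝ) ≠ 0 :=
  Nat.cast_ne_zero.mpr (Nat.factorial_ne_zero _)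

lemma Pa_comp (x : ℝ) (t : ℕ × ℕ × ℕ) : Pa x (phiA t) = g3 x t := by
  obtain ⟨n, k, l⟩ := t
  simp only [Pa, phiA, P, g3, u]
  simp only [show k < k + n + 1 by omega, if_true]
  simp only [show k ≤ k + l + n + 1 ∧ k + n + 1 ≤ k + l + n + 1 by omega, and_self, if_true]
  have e1 : k + l + n + 1 - (k + n + 1) = l := by omega
  have e2 : k + l + n + 1 - k = l + n + 1 := by omega
  have e3 : k + (n + 1) = k + n + 1 := by omega
  have e4 : l + (n + 1) = l + n + 1 := by omega
  rw [e1, e2, e3, e4]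
  field_simp [fact_ne]
  ring

lemma Pb_comp (x : ℝ) (t : ℕ × ℕ × ℕ) : Pb x (phiB t) = g3 x t := by
  obtain ⟨n, k, l⟩ := t
  simp only [Pb, phiB, P, g3, u]
  simp only [show k < k + n + 1 by omega, if_true]
  simp only [show k + n + 1 ≤ k + l + n + 1 ∧ k ≤ k + l + n + 1 by omega, and_self, if_true]
  have e1 : k + l + n + 1 - k = l + n + 1 := by omega
  have e2 : k + l + n + 1 - (k + n + 1) = l := by omega
  have e3 : k + (n + 1) = k + n + 1 := by omega
  have e4 : l + (n + 1) = l + n + 1 := by omega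
  rw [e1, e2, e3, e4]
  have hs : ((-1 : ℝ)) ^ (2 * (n + 1)) = 1 := by
    rw [pow_mul]; norm_num
  rw [show k + n + 1 + (l + n + 1) = (k + l) + 2 * (n + 1) by ring, pow_add, hs, mul_one]
  field_simp [fact_ne]
  ring

lemma Pc_comp (x : ℝ) (p : ℕ × ℕ) : Pc x (phiC p) = u 0 p.1 x * u 0 p.2 x := by
  obtain ⟨k, l⟩ := p
  simp only [Pc, phiC, P, u, if_true, eq_self_iff_true]
  simp only [show k ≤ k + l ∧ k ≤ k + l by omega, and_self, if_true]
  have e1 : k + l - k = l := by omega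
  have e2 : k + 0 = k := by omega
  have e3 : l + 0 = l := by omega
  rw [e1, e2, e3]
  field_simp [fact_ne]
  ring

lemma Pa_supp' (x : ℝ) : Function.support (Pa x) ⊆ Set.range phiA :=
  Function.support_subset_iff'.mpr (Pa_supp x)
lemma Pb_supp' (x : ℝ) : Function.support (Pb x) ⊆ Set.range phiB :=
  Function.support_subset_iff'.mpr (Pb_supp x)
lemma Pc_supp' (x : ℝ) : Function.support (Pc x) ⊆ Set.range phiC :=
  Function.support_subset_iff'.mpr (Pc_supp x)

lemma summable_Pa (x : ℝ) : Summable (Pa x) :=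
  (phiA_inj.summable_iff (Pa_supp x)).1 ((summable_g3 x).congr fun t => (Pa_comp x t).symm)
lemma summable_Pb (x : ℝ) : Summable (Pb x) :=
  (phiB_inj.summable_iff (Pb_supp x)).1 ((summable_g3 x).congr fun t => (Pb_comp x t).symm)
lemma summable_Pc (x : ℝ) : Summable (Pc x) :=
  (phiC_inj.summable_iff (Pc_supp x)).1 ((summable_uu 0 x).congr fun p => (Pc_comp x p).symm)

lemma tsum_Pa (x : ℝ) : ∑' t, Pa x t = ∑' n : ℕ, (∑' k, u (n + 1) k x) ^ 2 := by
  rw [← phiA_inj.tsum_eq (Pa_supp' x), ← tsum_g3]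
  exact tsum_congr fun t => Pa_comp x t
lemma tsum_Pb (x : ℝ) : ∑' t, Pb x t = ∑' n : ℕ, (∑' k, u (n + 1) k x) ^ 2 := by
  rw [← phiB_inj.tsum_eq (Pb_supp' x), ← tsum_g3]
  exact tsum_congr fun t => Pb_comp x t
lemma tsum_Pc (x : ℝ) : ∑' t, Pc x t = (∑' k, u 0 k x) ^ 2 := by
  rw [← phiC_inj.tsum_eq (Pc_supp' x), sq_tsum_u]
  exact tsum_congr fun p => Pc_comp x p

lemma summable_P (x : ℝ) : Summable (P x) :=
  (((summable_Pa x).add (summable_Pb x)).add (summable_Pc x)).congr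
    fun t => (P_decomp x t).symm

lemma tsum_P_decomp (x : ℝ) :
    ∑' t, P x t = (∑' k, u 0 k x) ^ 2 + 2 * ∑' n : ℕ, (∑' k, u (n + 1) k x) ^ 2 := by
  calc ∑' t, P x t = ∑' t, (Pa x t + Pb x t + Pc x t) := tsum_congr (P_decomp x)
    _ = (∑' t, Pa x t + ∑' t, Pb x t) + ∑' t, Pc x t := by
        rw [Summable.tsum_add ((summable_Pa x).add (summable_Pb x)) (summable_Pc x),
          Summable.tsum_add (summable_Pa x) (summable_Pb x)]
    _ = _ := by rw [tsum_Pa, tsum_Pb, tsum_Pc]; ring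

lemma c_alt (N : ℕ) (hN : N ≠ 0) :
    ∑ a ∈ Finset.range (N + 1), (-1 : ℝ) ^ a / (Nat.factorial a * Nat.factorial (N - a)) = 0 := by
  have key : ∀ a ∈ Finset.range (N + 1),
      (-1 : ℝ) ^ a / (Nat.factorial a * Nat.factorial (N - a)) =
        ((-1 : ℝ) ^ a * (N.choose a : ℝ)) / (Nat.factorial N) := by
    intro a ha
    have haN : a ≤ N := by simpa [Nat.lt_succ_iff] using Finset.mem_range.mp ha
    have h := Nat.choose_mul_factorial_mul_factorial haN
    have h' : ((N.choose a : ℝ)) * (Nat.factorial a) * (Nat.factorial (N - a)) =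
        (Nat.factorial N : ℝ) := by exact_mod_cast congrArg (Nat.cast (R := ℝ)) h
    have hb : (0 : ℝ) < (Nat.factorial a : ℝ) * (Nat.factorial (N - a)) := by
      have := Nat.factorial_pos a; have := Nat.factorial_pos (N - a)
      positivity
    have hd : (0 : ℝ) < (Nat.factorial N : ℝ) := by
      have := Nat.factorial_pos N; positivity
    rw [div_eq_div_iff hb.ne' hd.ne']
    rw [← h']
    ring
  rw [Finset.sum_congr rfl key]
  rw [← Finset.sum_div]
  have : ∑ a ∈ Finset.range (N + 1), (-1 : ℝ) ^ a * (N.choose a : ℝ) = 0 := by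
    have := Int.alternating_sum_range_choose_of_ne hN
    exact_mod_cast congrArg (fun z : ℤ => (z : ℝ)) this
  rw [this, zero_div]

lemma P_inner (x : ℝ) (N : ℕ) :
    ∑' p : ℕ × ℕ, P x (N, p) = if N = 0 then 1 else 0 := by
  classical
  have hsupp : ∀ p : ℕ × ℕ, p ∉ Finset.range (N + 1) ×ˢ Finset.range (N + 1) →
      P x (N, p) = 0 := by
    rintro ⟨a, b⟩ hp
    simp only [Finset.mem_product, Finset.mem_range] at hp
    have hcond : ¬(a ≤ N ∧ b ≤ N) := by omega
    simp only [P]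
    rw [if_neg hcond]
  rw [tsum_eq_sum hsupp, Finset.sum_product]
  have hterm : ∀ a ∈ Finset.range (N + 1), ∀ b ∈ Finset.range (N + 1),
      P x (N, a, b) = (x ^ (2 * N) * ((-1 : ℝ) ^ a / (Nat.factorial a * Nat.factorial (N - a)))) *
        ((-1 : ℝ) ^ (N - b) / (Nat.factorial b * Nat.factorial (N - b))) := by
    intro a ha b hb
    simp only [Finset.mem_range] at ha hb
    simp only [P]
    rw [if_pos (show a ≤ N ∧ b ≤ N by omega)]
    rw [pow_add]
    ring
  rw [Finset.sum_congr rfl fun a ha => Finset.sum_congr rfl fun b hb => hterm a ha b hb]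
  rw [← Finset.sum_mul_sum]
  rw [← Finset.mul_sum]
  have hreflect : ∑ b ∈ Finset.range (N + 1),
      (-1 : ℝ) ^ (N - b) / (Nat.factorial b * Nat.factorial (N - b)) =
      ∑ b ∈ Finset.range (N + 1),
      (-1 : ℝ) ^ b / (Nat.factorial b * Nat.factorial (N - b)) := by
    rw [← Finset.sum_range_reflect]
    apply Finset.sum_congr rfl
    intro b hb
    simp only [Finset.mem_range] at hb
    have e1 : N + 1 - 1 - b = N - b := by omega
    have e2 : N - (N - b) = b := by omega
    rw [e1, e2, mul_comm]
  rcases Nat.eq_zero_or_pos N with hN | hN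
  · subst hN
    simp [Nat.factorial]
  · rw [if_neg (by omega : ¬ N = 0), hreflect, c_alt N (by omega)]
    ring

lemma tsum_P_eq_one (x : ℝ) : ∑' t, P x t = 1 := by
  have hinner : ∀ N, Summable fun p : ℕ × ℕ => P x (N, p) := by
    intro N
    apply summable_of_ne_finset_zero (s := Finset.range (N + 1) ×ˢ Finset.range (N + 1))
    rintro ⟨a, b⟩ hp
    simp only [Finset.mem_product, Finset.mem_range] at hp
    have hcond : ¬(a ≤ N ∧ b ≤ N) := by omega
    simp only [P]
    rw [if_neg hcond]
  rw [Summable.tsum_prod' (summable_P x) hinner]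
  rw [tsum_congr fun N => P_inner x N]
  exact tsum_ite_eq 0 1

/-- The Parseval-type identity `J₀(s)² + 2 ∑_{n≥1} J_n(s)² = 1`, in the variable `x = s/2`. -/
lemma bessel_identity (x : ℝ) :
    (∑' k, u 0 k x) ^ 2 + 2 * ∑' n : ℕ, (∑' k, u (n + 1) k x) ^ 2 = 1 := by
  rw [← tsum_P_decomp, tsum_P_eq_one]

/-- The three-term recurrence `(m+1) J_{m+1} = x (J_m + J_{m+2})` in the variable `x = s/2`. -/
lemma bessel_rec (m : ℕ) (x : ℝ) :
    ((m : ℝ) + 1) * (∑' k, u (m + 1) k x) =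
      x * (∑' k, u m k x) + x * (∑' k, u (m + 2) k x) := by
  classical
  set w : ℕ → ℝ := fun k => if k = 0 then 0 else x * u (m + 2) (k - 1) x with hw_def
  have hw_succ : ∀ k, w (k + 1) = x * u (m + 2) k x := by
    intro k; simp [hw_def]
  have hw : Summable w := by
    apply (summable_nat_add_iff 1).mp
    exact ((summable_u (m + 2) x).mul_left x).congr fun k => (hw_succ k).symm
  have h2 : x * (∑' k, u (m + 2) k x) = ∑' k, w k := by
    rw [Summable.tsum_eq_zero_add hw]
    simp only [hw_def, if_pos rfl, zero_add]
    rw [← tsum_mul_left]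
    exact tsum_congr fun k => by simp
  rw [h2, ← tsum_mul_left, ← tsum_mul_left, ← Summable.tsum_add ((summable_u m x).mul_left x) hw]
  apply tsum_congr
  intro k
  rcases k with _ | j
  · simp only [hw_def, if_pos rfl, add_zero]
    simp only [u, pow_zero, Nat.factorial_zero, Nat.factorial_succ]
    have := fact_ne m
    push_cast
    field_simp
    simp only [zero_add, Nat.factorial_succ]
    push_cast
    ring
  · have hj : w (j + 1) = x * u (m + 2) j x := hw_succ j
    rw [hj]
    simp only [u]
    have e1 : j + 1 + (m + 1) = (j + m + 1) + 1 := by omega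
    have e2 : j + 1 + m = j + m + 1 := by omega
    have e3 : j + (m + 2) = (j + m + 1) + 1 := by omega
    have e4 : 2 * (j + 1) + (m + 1) = 2 * j + m + 3 := by omega
    have e5 : 2 * (j + 1) + m = 2 * j + m + 2 := by omega
    have e6 : 2 * j + (m + 2) = 2 * j + m + 2 := by omega
    rw [e1, e2, e3, e4, e5, e6]
    rw [Nat.factorial_succ (j + m + 1), Nat.factorial_succ j, pow_succ x (2 * j + m + 2),
      pow_succ (-1 : ℝ) j]
    have h1 := fact_ne j
    have h2 := fact_ne (j + m + 1)
    push_cast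
    field_simp
    ring

/-- The key pointwise bound: for `r ≠ 0`, the series of the theorem is bounded by `4 e^{-2νr}`. -/
lemma pointwise_bound (ν r : ℝ) (hr : r ≠ 0) :
    ∑' n : ℕ, ENNReal.ofReal
        (((n : ℝ) + 1) ^ 2 * besselJ (n + 1) (2 * r) ^ 2 * Real.exp (-2 * ν * r) / r ^ 2) ≤
      ENNReal.ofReal (4 * Real.exp (-2 * ν * r)) := by
  set J : ℕ → ℝ := fun m => ∑' k, u m k r with hJ
  have h2r : ∀ m, besselJ m (2 * r) = J m := by
    intro m
    rw [besselJ_eq]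
    norm_num
    rfl
  have hid := bessel_identity r
  have hsum1 : Summable fun n : ℕ => J (n + 1) ^ 2 := summable_Jsq_succ r
  have hS_nonneg : 0 ≤ ∑' n : ℕ, J (n + 1) ^ 2 := tsum_nonneg fun n => sq_nonneg _
  have hS_le : ∑' n : ℕ, J (n + 1) ^ 2 ≤ 1 / 2 := by nlinarith [sq_nonneg (J 0)]
  have hJ0 : J 0 ^ 2 ≤ 1 := by nlinarith
  have hsum0 : Summable fun n : ℕ => J n ^ 2 :=
    (summable_nat_add_iff 1).mp hsum1
  have hsum2 : Summable fun n : ℕ => J (n + 2) ^ 2 :=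
    (summable_nat_add_iff 2).mpr hsum0
  have hts0 : ∑' n : ℕ, J n ^ 2 ≤ 3 / 2 := by
    rw [Summable.tsum_eq_zero_add hsum0]
    have : ∑' n : ℕ, J (n + 1) ^ 2 ≤ 1 / 2 := hS_le
    nlinarith
  have hts2 : ∑' n : ℕ, J (n + 2) ^ 2 ≤ 1 / 2 := by
    have h := Summable.tsum_eq_zero_add hsum1
    norm_num at h
    have he : ∑' n : ℕ, J (n + 2) ^ 2 = ∑' b : ℕ, J (b + 1 + 1) ^ 2 :=
      tsum_congr fun b => by norm_num
    rw [he]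
    nlinarith [sq_nonneg (J 1)]
  set ex : ℝ := Real.exp (-2 * ν * r) with hex
  have hex_pos : 0 < ex := Real.exp_pos _
  set bnd : ℕ → ℝ := fun n => (2 * J n ^ 2 + 2 * J (n + 2) ^ 2) * ex with hbnd
  have hsum_bnd : Summable bnd :=
    ((hsum0.mul_left 2).add (hsum2.mul_left 2)).mul_right ex
  have hbnd_nonneg : ∀ n, 0 ≤ bnd n := by
    intro n
    have := sq_nonneg (J n); have := sq_nonneg (J (n + 2))
    positivity
  have htsum_bnd : ∑' n, bnd n ≤ 4 * ex := by
    rw [hbnd, tsum_mul_right, Summable.tsum_add (hsum0.mul_left 2) (hsum2.mul_left 2),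
      tsum_mul_left, tsum_mul_left]
    nlinarith
  have hterm_le : ∀ n : ℕ,
      ((n : ℝ) + 1) ^ 2 * besselJ (n + 1) (2 * r) ^ 2 * Real.exp (-2 * ν * r) / r ^ 2 ≤ bnd n := by
    intro n
    rw [h2r]
    have hrec : ((n : ℝ) + 1) * J (n + 1) = r * (J n + J (n + 2)) := by
      have := bessel_rec n r
      rw [hJ]
      push_cast
      rw [mul_add]
      exact this
    have hsq : ((n : ℝ) + 1) ^ 2 * J (n + 1) ^ 2 = r ^ 2 * (J n + J (n + 2)) ^ 2 := by
      have := congrArg (fun y => y ^ 2) hrec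
      simpa [mul_pow] using this
    have hr2 : (0 : ℝ) < r ^ 2 := by positivity
    rw [show ((n : ℝ) + 1) ^ 2 * J (n + 1) ^ 2 * Real.exp (-2 * ν * r) / r ^ 2 =
      (((n : ℝ) + 1) ^ 2 * J (n + 1) ^ 2) * Real.exp (-2 * ν * r) / r ^ 2 by ring, hsq]
    rw [show r ^ 2 * (J n + J (n + 2)) ^ 2 * Real.exp (-2 * ν * r) / r ^ 2 =
      (J n + J (n + 2)) ^ 2 * Real.exp (-2 * ν * r) by field_simp]
    have h1 : (J n + J (n + 2)) ^ 2 ≤ 2 * J n ^ 2 + 2 * J (n + 2) ^ 2 := by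
      nlinarith [sq_nonneg (J n - J (n + 2))]
    rw [hbnd]
    have : Real.exp (-2 * ν * r) = ex := rfl
    rw [this]
    exact mul_le_mul_of_nonneg_right h1 hex_pos.le
  calc ∑' n : ℕ, ENNReal.ofReal
        (((n : ℝ) + 1) ^ 2 * besselJ (n + 1) (2 * r) ^ 2 * Real.exp (-2 * ν * r) / r ^ 2)
      ≤ ∑' n : ℕ, ENNReal.ofReal (bnd n) :=
        ENNReal.tsum_le_tsum fun n => ENNReal.ofReal_le_ofReal (hterm_le n)
    _ = ENNReal.ofReal (∑' n, bnd n) :=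
        (ENNReal.ofReal_tsum_of_nonneg hbnd_nonneg hsum_bnd).symm
    _ ≤ ENNReal.ofReal (4 * ex) := ENNReal.ofReal_le_ofReal htsum_bnd

end BesselAux

/-- **Summability of the second-moment series of the invariant law** (Lemma A.4): for every
`ν > 0`, the integral `∫_0^∞ ∑_{n=1}^∞ n² J_n(2r)² e^{-2νr} / r² dr` is finite (the sum
over `n ≥ 1` is written as a sum over `n : ℕ` of the terms of index `n + 1`). -/
theorem summability_second_moment_series (ν : ℝ) (hν : 0 < ν) :
    ∫⁻ r in Set.Ioi (0 : ℝ),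
      ∑' n : ℕ, ENNReal.ofReal
        (((n : ℝ) + 1) ^ 2 * besselJ (n + 1) (2 * r) ^ 2 * Real.exp (-2 * ν * r) / r ^ 2)
      < ⊤ := by
  have hg : Measurable fun t : ℝ => ENNReal.ofReal (4 * Real.exp (-2 * ν * t)) := by
    apply Measurable.ennreal_ofReal
    apply Measurable.const_mul
    exact Real.measurable_exp.comp (measurable_id.const_mul (-2 * ν))
  have hmono := setLIntegral_mono (μ := volume) hg
    (fun r hr => BesselAux.pointwise_bound ν r (ne_of_gt (Set.mem_Ioi.mp hr)))
  refine lt_of_le_of_lt hmono ?_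
  have h1 : IntegrableOn (fun t : ℝ => Real.exp (-(2 * ν) * t)) (Set.Ioi 0) volume :=
    exp_neg_integrableOn_Ioi 0 (by positivity)
  have h2 : IntegrableOn (fun t : ℝ => 4 * Real.exp (-2 * ν * t)) (Set.Ioi 0) volume := by
    refine IntegrableOn.congr_fun (h1.const_mul 4) (fun t _ => ?_) measurableSet_Ioi
    ring_nf
  exact h2.lintegral_lt_top

end
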